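/- For a convex function f : ℝⁿ → ℝ and any x̄, the radial epiderivative coincides with the directional derivative: f^r(x̄;h) = f′(x̄;h) for every h, where f′(x̄;h) = lim_{t↓0}(f(x̄+th)−f(x̄))/t exists by convexity. -/

import Mathlib

open Filter Topology

/-- The radial epiderivative of `f` at `x` in direction `h`:
`f^r(x;h) = inf_{t>0} liminf_{u → h} (f(x + t u) - f(x)) / t`, valued in `EReal`. -/
noncomputable def radEpi {X : Type*} [NormedAddCommGroup X] [NormedSpace ℝ X]
    (f : X → ℝ) (x h : X) : EReal :=
  ⨅ t : Set.Ioi (0 : ℝ),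
    Filter.liminf (fun u : X => (((f (x + (t : ℝ) • u) - f x) / (t : ℝ) : ℝ) : EReal)) (𝓝 h)

/-- For a convex function `f : ℝⁿ → ℝ`, the radial epiderivative coincides with the
directional derivative: `f^r(x₀;h) = f'(x₀;h)` for every `h`. -/
theorem radEpi_eq_dirDeriv_of_convex {n : ℕ}
    (f : EuclideanSpace ℝ (Fin n) → ℝ) (hconv : ConvexOn ℝ Set.univ f)
    (x₀ : EuclideanSpace ℝ (Fin n)) (d : EuclideanSpace ℝ (Fin n) → ℝ)
    (hd : ∀ h, Filter.Tendsto (fun t : ℝ => (f (x₀ + t • h) - f x₀) / t)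
      (𝓝[>] (0 : ℝ)) (𝓝 (d h))) :
    ∀ h, radEpi f x₀ h = ((d h : ℝ) : EReal) := by
  intro h
  have hfc : Continuous f := by
    rw [← continuousOn_univ]
    exact hconv.continuousOn isOpen_univ
  -- the difference quotient
  set q : ℝ → ℝ := fun t => (f (x₀ + t • h) - f x₀) / t with hq
  -- monotonicity of the difference quotient
  have hmono : ∀ s t : ℝ, 0 < s → s ≤ t → q s ≤ q t := by
    intro s t hs hst
    have ht : 0 < t := lt_of_lt_of_le hs hst
    have hab : (1 - s / t) + s / t = 1 := by ring
    have ha : (0:ℝ) ≤ 1 - s / t := by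
      have : s / t ≤ 1 := (div_le_one ht).2 hst
      linarith
    have hb : (0:ℝ) ≤ s / t := by positivity
    have key := hconv.2 (Set.mem_univ x₀) (Set.mem_univ (x₀ + t • h)) ha hb hab
    have heq : (1 - s / t) • x₀ + (s / t) • (x₀ + t • h) = x₀ + s • h := by
      rw [smul_add, smul_smul]
      rw [div_mul_cancel₀ _ (ne_of_gt ht)]
      rw [← add_assoc, ← add_smul]
      rw [show (1 - s / t) + s / t = 1 by ring, one_smul]
    rw [heq] at key
    simp only [smul_eq_mul] at key
    have : f (x₀ + s • h) - f x₀ ≤ (s / t) * (f (x₀ + t • h) - f x₀) := by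
      nlinarith [key]
    rw [hq]
    simp only
    rw [div_le_div_iff₀ hs ht]
    calc (f (x₀ + s • h) - f x₀) * t ≤ (s / t) * (f (x₀ + t • h) - f x₀) * t := by
          nlinarith
      _ = s * (f (x₀ + t • h) - f x₀) * (t / t) := by ring
      _ = (f (x₀ + t • h) - f x₀) * s := by rw [div_self (ne_of_gt ht)]; ring
  -- d h ≤ q t for all t > 0
  have hlb : ∀ t : ℝ, 0 < t → d h ≤ q t := by
    intro t ht
    refine le_of_tendsto (hd h) ?_
    filter_upwards [Ioc_mem_nhdsGT_of_mem (Set.left_mem_Ico.2 ht)] with s hs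
    exact hmono s t hs.1 hs.2
  -- liminf computation: the liminf at h of the continuous map equals its value
  have hliminf : ∀ t : Set.Ioi (0:ℝ),
      Filter.liminf (fun u => (((f (x₀ + (t:ℝ) • u) - f x₀) / (t:ℝ) : ℝ) : EReal)) (𝓝 h)
        = ((q t : ℝ) : EReal) := by
    intro t
    have hc : Filter.Tendsto (fun u => (((f (x₀ + (t:ℝ) • u) - f x₀) / (t:ℝ) : ℝ) : EReal))
        (𝓝 h) (𝓝 ((q t : ℝ) : EReal)) := by
      apply Filter.Tendsto.comp (continuous_coe_real_ereal.tendsto _)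
      have : Continuous (fun u => (f (x₀ + (t:ℝ) • u) - f x₀) / (t:ℝ)) := by
        fun_prop
      exact this.tendsto h
    exact hc.liminf_eq
  rw [radEpi]
  simp_rw [hliminf]
  apply le_antisymm
  · -- iInf ≤ d h
    by_contra hcon
    push_neg at hcon
    obtain ⟨r, hr1, hr2⟩ := EReal.exists_between_coe_real hcon
    -- pick t > 0 with q t < r
    have : ∀ᶠ t in 𝓝[>] (0:ℝ), q t < r := by
      apply (hd h).eventually_lt_const
      exact_mod_cast hr1
    obtain ⟨t, hqt, ht⟩ := (this.and eventually_mem_nhdsWithin).exists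
    have : (⨅ t : Set.Ioi (0:ℝ), ((q t : ℝ) : EReal)) ≤ ((q t : ℝ) : EReal) :=
      iInf_le _ (⟨t, ht⟩ : Set.Ioi (0:ℝ))
    have hlt : ((q t : ℝ) : EReal) < (r : EReal) := by exact_mod_cast hqt
    exact absurd (lt_of_le_of_lt (this.trans hlt.le) hr2) (lt_irrefl _)
  · -- d h ≤ iInf
    apply le_iInf
    rintro ⟨t, ht⟩
    exact_mod_cast hlb t ht
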